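/- The function f₁(x) = e^x(2x³ − x² + 6x − 12) − 2x³ + x² + 6x + 12 is nonnegative for all real x. -/

import Mathlib

noncomputable def E (a b c d p q r s : ℝ) (x : ℝ) : ℝ :=
  Real.exp x * (a*x^3 + b*x^2 + c*x + d) + (p*x^3 + q*x^2 + r*x + s)

lemma E_hasDerivAt (a b c d p q r s x : ℝ) :
    HasDerivAt (E a b c d p q r s)
      (E a (b+3*a) (c+2*b) (d+c) 0 (3*p) (2*q) r x) x := by
  have hpoly : HasDerivAt (fun x : ℝ => a*x^3 + b*x^2 + c*x + d)
      (3*a*x^2 + 2*b*x + c) x := by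
    have := (((hasDerivAt_pow 3 x).const_mul a).add ((hasDerivAt_pow 2 x).const_mul b)).add
      (((hasDerivAt_id x).const_mul c).add (hasDerivAt_const x d))
    convert this using 1
    · rfl
    · rfl
    · ext t; simp only [id_eq, Pi.add_apply]; ring
    · push_cast; ring
  have hpoly2 : HasDerivAt (fun x : ℝ => p*x^3 + q*x^2 + r*x + s)
      (3*p*x^2 + 2*q*x + r) x := by
    have := (((hasDerivAt_pow 3 x).const_mul p).add ((hasDerivAt_pow 2 x).const_mul q)).add
      (((hasDerivAt_id x).const_mul r).add (hasDerivAt_const x s))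
    convert this using 1
    · rfl
    · rfl
    · ext t; simp only [id_eq, Pi.add_apply]; ring
    · push_cast; ring
  have := ((Real.hasDerivAt_exp x).mul hpoly).add hpoly2
  convert this using 1
  · rfl
  · rfl
  · rfl
  simp only [E]
  ring

lemma nonneg_of_hasDerivAt (F F' : ℝ → ℝ) (hd : ∀ y, HasDerivAt F (F' y) y)
    (h0 : F 0 = 0) (hF' : ∀ y, 0 ≤ y → 0 ≤ F' y) : ∀ x, 0 ≤ x → 0 ≤ F x := by
  intro x hx
  have hmono : MonotoneOn F (Set.Ici (0:ℝ)) := by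
    apply monotoneOn_of_deriv_nonneg (convex_Ici 0)
    · exact fun y _ => (hd y).differentiableAt.continuousAt.continuousWithinAt
    · exact fun y _ => ((hd y).differentiableAt).differentiableWithinAt
    · intro y hy
      rw [interior_Ici] at hy
      rw [(hd y).deriv]
      exact hF' y (le_of_lt hy)
  calc (0:ℝ) = F 0 := h0.symm
    _ ≤ F x := hmono (Set.self_mem_Ici) hx hx

lemma E_step (a b c d p q r s : ℝ) (hds : d + s = 0)
    (h : ∀ x, 0 ≤ x → 0 ≤ E a (b+3*a) (c+2*b) (d+c) 0 (3*p) (2*q) r x) :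
    ∀ x, 0 ≤ x → 0 ≤ E a b c d p q r s x := by
  apply nonneg_of_hasDerivAt _ _ (fun y => E_hasDerivAt a b c d p q r s y) _ h
  simp [E]
  linarith

lemma E_base (b c d : ℝ) (hb : 0 ≤ b) (hc : 0 ≤ c) (hdd : 0 ≤ d) :
    ∀ x, 0 ≤ x → 0 ≤ E 2 b c d 0 0 0 0 x := by
  intro x hx
  simp only [E]
  have : 0 ≤ 2*x^3 + b*x^2 + c*x + d := by positivity
  have := mul_nonneg (Real.exp_pos x).le this
  nlinarith

lemma pos_side : ∀ x, 0 ≤ x → 0 ≤ E 2 (-1) 6 (-12) (-2) 1 6 12 x := by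
  apply E_step _ _ _ _ _ _ _ _ (by norm_num)
  norm_num
  apply E_step _ _ _ _ _ _ _ _ (by norm_num)
  norm_num
  apply E_step _ _ _ _ _ _ _ _ (by norm_num)
  norm_num
  apply E_step _ _ _ _ _ _ _ _ (by norm_num)
  norm_num
  exact E_base 23 70 48 (by norm_num) (by norm_num) (by norm_num)

lemma neg_side : ∀ x, 0 ≤ x → 0 ≤ E 2 1 (-6) 12 (-2) (-1) (-6) (-12) x := by
  apply E_step _ _ _ _ _ _ _ _ (by norm_num)
  norm_num
  apply E_step _ _ _ _ _ _ _ _ (by norm_num)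
  norm_num
  apply E_step _ _ _ _ _ _ _ _ (by norm_num)
  norm_num
  apply E_step _ _ _ _ _ _ _ _ (by norm_num)
  norm_num
  exact E_base 25 74 48 (by norm_num) (by norm_num) (by norm_num)

theorem f1_nonneg :
    ∀ x : ℝ, 0 ≤ Real.exp x * (2*x^3 - x^2 + 6*x - 12) - 2*x^3 + x^2 + 6*x + 12 := by
  intro x
  rcases le_or_gt 0 x with hx | hx
  · have := pos_side x hx
    simp only [E] at this
    linarith
  · have h := neg_side (-x) (by linarith)
    simp only [E] at h
    have hmul := mul_nonneg (Real.exp_pos x).le h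
    have hexp : Real.exp x * Real.exp (-x) = 1 := by
      rw [← Real.exp_add]; simp
    rw [mul_add, ← mul_assoc, hexp, one_mul] at hmul
    ring_nf at hmul ⊢
    linarith
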